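/- For a matroid M of rank r on E, the independent set polytope satisfies the signed Minkowski sum decomposition I_M = Σ_{A⊆E} β̃(M/A) D_{E−A}. -/

import Mathlib

open Finset
open scoped Pointwise Classical

/-- The 0/1 indicator vector of a finite set `B`. -/
def indic {α : Type*} [DecidableEq α] (B : Finset α) : α → ℝ :=
  fun a => if a ∈ B then 1 else 0

/-- The independent set polytope: convex hull of the indicator vectors of the
independent sets. -/
def indepPolytope {α : Type*} [DecidableEq α] (E : Finset α) (r : Finset α → ℕ) :
    Set (α → ℝ) :=
  convexHull ℝ {x | ∃ A : Finset α, A ⊆ E ∧ r A = A.card ∧ x = indic A}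

/-- `D_J = conv{0, e_i : i ∈ J}`. -/
def Dsimp {α : Type*} [DecidableEq α] (J : Finset α) : Set (α → ℝ) :=
  convexHull ℝ (insert 0 {x | ∃ i ∈ J, x = Pi.single i (1 : ℝ)})

/-- The beta invariant. -/
def betaInv {α : Type*} [DecidableEq α] (G : Finset α) (ρ : Finset α → ℕ) : ℤ :=
  (-1) ^ (ρ G) * ∑ X ∈ G.powerset, (-1) ^ X.card * (ρ X : ℤ)

/-- The signed beta invariant `β̃(M) = (−1)^{r(M)+1} β(M)`. -/
def betaT {α : Type*} [DecidableEq α] (G : Finset α) (ρ : Finset α → ℕ) : ℤ :=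
  (-1) ^ (ρ G + 1) * betaInv G ρ

/-- The rank function of the contraction `M/A`. -/
def contr {α : Type*} [DecidableEq α] (r : Finset α → ℕ) (A : Finset α) :
    Finset α → ℕ :=
  fun X => r (A ∪ X) - r A

set_option linter.unusedSectionVars false
set_option linter.unusedVariables false

private lemma moeb {α : Type*} [DecidableEq α] (T : Finset α) (g : Finset α → ℝ) :
    ∑ S ∈ T.powerset, (-1 : ℝ) ^ S.card * ∑ Y ∈ S.powerset, (-1 : ℝ) ^ Y.card * g Y = g T := by
  induction T using Finset.induction_on generalizing g with
  | empty => simp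
  | @insert a T ha ih =>
    have key : ∀ (S : Finset α), S ∈ T.powerset → ∀ h : Finset α → ℝ,
        ∑ Y ∈ (insert a S).powerset, (-1:ℝ)^Y.card * h Y
        = ∑ Y ∈ S.powerset, (-1:ℝ)^Y.card * h Y
          - ∑ Y ∈ S.powerset, (-1:ℝ)^Y.card * h (insert a Y) := by
      intro S hS h
      rw [Finset.mem_powerset] at hS
      have haS : a ∉ S := fun hh => ha (hS hh)
      rw [Finset.powerset_insert, Finset.sum_union, Finset.sum_image]
      · have : ∀ Y ∈ S.powerset, (-1:ℝ)^(insert a Y).card * h (insert a Y)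
            = -((-1:ℝ)^Y.card * h (insert a Y)) := by
          intro Y hY
          rw [Finset.mem_powerset] at hY
          have : a ∉ Y := fun hh => haS (hY hh)
          rw [Finset.card_insert_of_notMem this, pow_succ]
          ring
        rw [Finset.sum_congr rfl this, Finset.sum_neg_distrib]
        ring
      · intro Y hY Z hZ hYZ
        rw [Finset.mem_coe, Finset.mem_powerset] at hY hZ
        have haY : a ∉ Y := fun hh => haS (hY hh)
        have haZ : a ∉ Z := fun hh => haS (hZ hh)
        have := congrArg (Finset.erase · a) hYZ
        simpa [Finset.erase_insert, haY, haZ] using this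
      · rw [Finset.disjoint_left]
        intro S' hS1 hS2
        rw [Finset.mem_powerset] at hS1
        obtain ⟨Y, hY, rfl⟩ := Finset.mem_image.1 hS2
        exact haS (hS1 (Finset.mem_insert_self a Y))
    rw [Finset.powerset_insert, Finset.sum_union, Finset.sum_image]
    · have step : ∀ S ∈ T.powerset,
          (-1:ℝ)^(insert a S).card * ∑ Y ∈ (insert a S).powerset, (-1:ℝ)^Y.card * g Y
          = -((-1:ℝ)^S.card * ∑ Y ∈ S.powerset, (-1:ℝ)^Y.card * g Y)
            + (-1:ℝ)^S.card * ∑ Y ∈ S.powerset, (-1:ℝ)^Y.card * g (insert a Y) := by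
        intro S hS
        have hSsub := Finset.mem_powerset.1 hS
        have haS : a ∉ S := fun hh => ha (hSsub hh)
        rw [key S hS g, Finset.card_insert_of_notMem haS, pow_succ]
        ring
      rw [Finset.sum_congr rfl step, Finset.sum_add_distrib, Finset.sum_neg_distrib]
      have := ih (fun Y => g (insert a Y))
      rw [this]
      ring
    · intro Y hY Z hZ hYZ
      rw [Finset.mem_coe, Finset.mem_powerset] at hY hZ
      have haY : a ∉ Y := fun hh => ha (hY hh)
      have haZ : a ∉ Z := fun hh => ha (hZ hh)
      have := congrArg (Finset.erase · a) hYZ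
      simpa [Finset.erase_insert, haY, haZ] using this
    · rw [Finset.disjoint_left]
      intro S hS hS'
      rw [Finset.mem_powerset] at hS
      obtain ⟨Y, hY, rfl⟩ := Finset.mem_image.1 hS'
      exact ha (hS (Finset.mem_insert_self a Y))

private lemma abel_swap (f g : ℕ → ℝ) (n : ℕ) (h0 : g 0 = 0) (hn : f n = 0) :
    ∑ j ∈ range n, (f j - f (j+1)) * g (j+1) = ∑ j ∈ range n, f j * (g (j+1) - g j) := by
  have hshift : ∑ j ∈ range n, f (j+1) * g (j+1) = ∑ j ∈ range n, f j * g j := by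
    have h1 := Finset.sum_range_succ' (fun j => f j * g j) n
    have h2 := Finset.sum_range_succ (fun j => f j * g j) n
    simp only [h0, hn, mul_zero, zero_mul, add_zero] at h1 h2
    rw [← h1, h2]
  simp only [sub_mul, mul_sub]
  rw [Finset.sum_sub_distrib, Finset.sum_sub_distrib, hshift]

private lemma tele (f : ℕ → ℝ) (a n : ℕ) (h : a ≤ n) :
    ∑ j ∈ Finset.Ico a n, (f j - f (j+1)) = f a - f n := by
  induction n, h using Nat.le_induction with
  | base => simp
  | succ n hn ih => rw [Finset.sum_Ico_succ_top hn, ih]; ring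

section Rank
variable {α : Type*} [DecidableEq α] (r : Finset α → ℕ)

private lemma rank_empty (hcard : ∀ A, r A ≤ A.card) : r ∅ = 0 :=
  Nat.le_zero.1 (by simpa using hcard ∅)

private lemma rank_insert_le (hcard : ∀ A, r A ≤ A.card)
    (hsub : ∀ A B, r (A ∪ B) + r (A ∩ B) ≤ r A + r B) (a : α) (X : Finset α) :
    r (insert a X) ≤ r X + 1 := by
  have h := hsub X {a}
  have h1 : r {a} ≤ 1 := by simpa using hcard {a}
  have h2 : X ∪ {a} = insert a X := by rw [Finset.union_comm, ← Finset.insert_eq]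
  rw [h2] at h
  omega

private lemma rank_union_card_le (hcard : ∀ A, r A ≤ A.card)
    (hsub : ∀ A B, r (A ∪ B) + r (A ∩ B) ≤ r A + r B) (X : Finset α) :
    ∀ Y : Finset α, r (X ∪ Y) ≤ r X + Y.card := by
  intro Y
  induction Y using Finset.induction_on with
  | empty => simp
  | @insert a Y ha ih =>
    rw [Finset.union_insert]
    calc r (insert a (X ∪ Y)) ≤ r (X ∪ Y) + 1 := rank_insert_le r hcard hsub a _
    _ ≤ r X + Y.card + 1 := by omega
    _ = r X + (insert a Y).card := by rw [Finset.card_insert_of_notMem ha]; ring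

private lemma indep_subset (hcard : ∀ A, r A ≤ A.card)
    (hsub : ∀ A B, r (A ∪ B) + r (A ∩ B) ≤ r A + r B)
    {A B : Finset α} (hA : r A = A.card) (hBA : B ⊆ A) : r B = B.card := by
  have h1 : r (B ∪ (A \ B)) ≤ r B + (A \ B).card := rank_union_card_le r hcard hsub B _
  rw [Finset.union_sdiff_of_subset hBA, Finset.card_sdiff_of_subset hBA] at h1
  have h2 := hcard B
  have h3 := Finset.card_le_card hBA
  omega

private lemma rank_aug (hcard : ∀ A, r A ≤ A.card) (hmono : ∀ A B, A ⊆ B → r A ≤ r B)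
    (hsub : ∀ A B, r (A ∪ B) + r (A ∩ B) ≤ r A + r B)
    {I X : Finset α} (hIX : I ⊆ X) (hI : r I = I.card) (hlt : r I < r X) :
    ∃ x ∈ X, x ∉ I ∧ r (insert x I) = I.card + 1 := by
  by_contra hcon
  push_neg at hcon
  have hflat : ∀ x ∈ X, x ∉ I → r (insert x I) = r I := by
    intro x hx hxI
    have h1 : r (insert x I) ≤ r I + 1 := rank_insert_le r hcard hsub x I
    have h2 : r I ≤ r (insert x I) := hmono _ _ (Finset.subset_insert x I)
    have h3 := hcon x hx hxI
    omega
  have hZ : ∀ Z : Finset α, Z ⊆ X \ I → r (I ∪ Z) = r I := by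
    intro Z hZX
    induction Z using Finset.induction_on with
    | empty => simp
    | @insert a Z ha ih =>
      have haX : a ∈ X \ I := hZX (Finset.mem_insert_self a Z)
      have hZX' : Z ⊆ X \ I := fun z hz => hZX (Finset.mem_insert_of_mem hz)
      have haI : a ∉ I := (Finset.mem_sdiff.1 haX).2
      have h := hsub (I ∪ Z) (insert a I)
      have hu : (I ∪ Z) ∪ insert a I = I ∪ insert a Z := by
        ext x; simp [Finset.mem_union, Finset.mem_insert]; tauto
      have hi : (I ∪ Z) ∩ insert a I = I := by
        ext x
        simp only [Finset.mem_inter, Finset.mem_union, Finset.mem_insert]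
        constructor
        · rintro ⟨h1, h2⟩
          rcases h2 with rfl | h2
          · rcases h1 with h1 | h1
            · exact h1
            · exact absurd h1 ha
          · exact h2
        · intro hx; exact ⟨Or.inl hx, Or.inr hx⟩
      rw [hu, hi, ih hZX', hflat a (Finset.mem_sdiff.1 haX).1 haI] at h
      have hle : r I ≤ r (I ∪ insert a Z) := hmono _ _ Finset.subset_union_left
      omega
  have := hZ (X \ I) Finset.Subset.rfl
  rw [Finset.union_sdiff_of_subset hIX] at this
  omega

end Rank

section Sep
variable {α : Type*} [DecidableEq α] (E : Finset α)

private lemma sep_fin (Q : Set (({ x // x ∈ E }) → ℝ)) (hfin : Q.Finite)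
    (x : { x // x ∈ E } → ℝ)
    (hx : ∀ w : { x // x ∈ E } → ℝ, ∃ q ∈ Q, ∑ j, w j * x j ≤ ∑ j, w j * q j) :
    x ∈ convexHull ℝ Q := by
  by_contra hcon
  obtain ⟨f, u, hfu, hux⟩ := geometric_hahn_banach_closed_point
    (convex_convexHull ℝ Q) (hfin.isClosed_convexHull (𝕜 := ℝ)) hcon
  set w : { x // x ∈ E } → ℝ := fun j => f (Pi.single j 1 : { x // x ∈ E } → ℝ) with hw
  have hf : ∀ y : { x // x ∈ E } → ℝ, f y = ∑ j, w j * y j := by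
    intro y
    have hy : y = ∑ j, y j • (Pi.single j 1 : { x // x ∈ E } → ℝ) := by
      funext j'
      simp [Finset.sum_apply, Pi.single_apply]
    calc f y = f (∑ j, y j • (Pi.single j 1 : { x // x ∈ E } → ℝ)) := by rw [← hy]
    _ = ∑ j, y j * f ((Pi.single j 1 : { x // x ∈ E } → ℝ)) := by
        rw [map_sum]
        exact Finset.sum_congr rfl fun j _ => by rw [map_smul, smul_eq_mul]
    _ = ∑ j, w j * y j := Finset.sum_congr rfl fun j _ => mul_comm _ _
  obtain ⟨q, hq, hle⟩ := hx w
  have h1 : f q < u := hfu q (subset_convexHull ℝ Q hq)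
  rw [hf q] at h1
  rw [hf x] at hux
  linarith

private lemma mem_hull_of_sep (Q : Set (α → ℝ)) (hfin : Q.Finite)
    (hsupp : ∀ q ∈ Q, ∀ a, a ∉ E → q a = 0) (x : α → ℝ) (hxs : ∀ a, a ∉ E → x a = 0)
    (hx : ∀ w : α → ℝ, ∃ q ∈ Q, ∑ i ∈ E, w i * x i ≤ ∑ i ∈ E, w i * q i) :
    x ∈ convexHull ℝ Q := by
  classical
  set ρ : (α → ℝ) →ₗ[ℝ] ({ x // x ∈ E } → ℝ) := LinearMap.funLeft ℝ ℝ Subtype.val with hρ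
  have hρapp : ∀ (z : α → ℝ) (j : { x // x ∈ E }), ρ z j = z ↑j := fun z j => rfl
  have conv : ∀ (w' : { x // x ∈ E } → ℝ) (z : α → ℝ),
      ∑ j, w' j * ρ z j = ∑ i ∈ E, (fun a => if h : a ∈ E then w' ⟨a, h⟩ else 0) i * z i := by
    intro w' z
    rw [← Finset.sum_coe_sort E]
    refine Finset.sum_congr rfl fun j _ => ?_
    rw [hρapp]
    simp
  have h1 : ρ x ∈ convexHull ℝ (ρ '' Q) := by
    refine sep_fin E _ (hfin.image ρ) _ fun w' => ?_
    obtain ⟨q, hq, hle⟩ := hx (fun a => if h : a ∈ E then w' ⟨a, h⟩ else 0)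
    exact ⟨ρ q, Set.mem_image_of_mem ρ hq, by rw [conv, conv]; exact hle⟩
  rw [← LinearMap.image_convexHull] at h1
  obtain ⟨y, hy, hyx⟩ := h1
  have hsuppHull : ∀ z ∈ convexHull ℝ Q, ∀ a, a ∉ E → z a = 0 := by
    intro z hz
    have hconv : Convex ℝ {z : α → ℝ | ∀ a, a ∉ E → z a = 0} := by
      intro p hp q hq t1 t2 h1 h2 h3 a ha
      simp only [Set.mem_setOf_eq] at hp hq
      simp [Pi.add_apply, hp a ha, hq a ha]
    exact convexHull_min (fun q hq => hsupp q hq) hconv hz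
  have hxy : y = x := by
    funext a
    by_cases ha : a ∈ E
    · exact congrFun hyx ⟨a, ha⟩
    · rw [hsuppHull y hy a ha, hxs a ha]
  rwa [← hxy]

end Sep

private noncomputable def wlist {α : Type*} [DecidableEq α] (E : Finset α) (w : α → ℝ) : List α :=
  E.toList.mergeSort (fun a b => decide (w b ≤ w a))

private noncomputable def Uset {α : Type*} [DecidableEq α] (E : Finset α) (w : α → ℝ) (j : ℕ) : Finset α :=
  ((wlist E w).take j).toFinset

private noncomputable def vval {α : Type*} [DecidableEq α] (E : Finset α) (w : α → ℝ) (j : ℕ) : ℝ :=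
  if h : j < (wlist E w).length then max (w ((wlist E w)[j])) 0 else 0

private noncomputable def hwval {α : Type*} [DecidableEq α] (w : α → ℝ) (S : Finset α) : ℝ :=
  (insert (0:ℝ) (S.image w)).max' (Finset.insert_nonempty _ _)

private noncomputable def optval {α : Type*} [DecidableEq α] (E : Finset α) (r : Finset α → ℕ) (w : α → ℝ) : ℝ :=
  ∑ j ∈ range (wlist E w).length,
    vval E w j * ((r (Uset E w (j+1)) : ℝ) - (r (Uset E w j) : ℝ))

section ListBasics
variable {α : Type*} [DecidableEq α] (E : Finset α) (w : α → ℝ)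

private lemma wlist_perm : (wlist E w).Perm E.toList := List.mergeSort_perm _ _

private lemma wlist_nodup : (wlist E w).Nodup :=
  ((wlist_perm E w).symm.nodup (Finset.nodup_toList E) : _)

private lemma wlist_toFinset : (wlist E w).toFinset = E := by
  ext a
  rw [List.mem_toFinset, (wlist_perm E w).mem_iff, Finset.mem_toList]

private lemma wlist_mem {a : α} : a ∈ wlist E w ↔ a ∈ E := by
  rw [← List.mem_toFinset, wlist_toFinset E w]

private lemma wlist_sorted : ∀ (i j : ℕ) (hi : i < (wlist E w).length)
    (hj : j < (wlist E w).length), i < j → w ((wlist E w)[j]) ≤ w ((wlist E w)[i]) := by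
  have h := List.pairwise_mergeSort (le := fun a b => decide (w b ≤ w a))
    (fun a b c h1 h2 => by
      simp only [decide_eq_true_eq] at *
      exact le_trans h2 h1)
    (fun a b => by
      simp only [Bool.or_eq_true, decide_eq_true_eq]
      exact le_total (w b) (w a))
    E.toList
  rw [List.pairwise_iff_getElem] at h
  intro i j hi hj hij
  have := h i j hi hj hij
  simp only [decide_eq_true_eq] at this
  convert this <;> unfold wlist <;> congr!

private lemma Uset_zero : Uset E w 0 = ∅ := by simp [Uset]

private lemma Uset_subset (j : ℕ) : Uset E w j ⊆ E := by
  intro a ha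
  rw [Uset, List.mem_toFinset] at ha
  exact (wlist_mem E w).1 (List.mem_of_mem_take ha)

private lemma Uset_mem {a : α} {j : ℕ} :
    a ∈ Uset E w j ↔ ∃ k, ∃ h : k < (wlist E w).length, k < j ∧ (wlist E w)[k] = a := by
  rw [Uset, List.mem_toFinset, List.mem_iff_getElem]
  constructor
  · rintro ⟨k, hk, hka⟩
    have hk' : k < (wlist E w).length := lt_of_lt_of_le hk (by
      rw [List.length_take]; exact min_le_right _ _)
    have hkj : k < j := lt_of_lt_of_le hk (by rw [List.length_take]; exact min_le_left _ _)
    exact ⟨k, hk', hkj, by rw [← List.getElem_take (xs := wlist E w) (h := hk)]; exact hka⟩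
  · rintro ⟨k, hk, hkj, hka⟩
    have hklen : k < ((wlist E w).take j).length := by
      rw [List.length_take]; exact lt_min hkj hk
    exact ⟨k, hklen, by rw [List.getElem_take]; exact hka⟩

private lemma Uset_succ {j : ℕ} (h : j < (wlist E w).length) :
    Uset E w (j+1) = insert ((wlist E w)[j]) (Uset E w j) := by
  have : (wlist E w).take (j+1) = (wlist E w).take j ++ [(wlist E w)[j]] := by
    rw [List.take_succ]
    congr 1
    rw [List.getElem?_eq_getElem h]
    rfl
  rw [Uset, this, List.toFinset_append]
  simp [Uset]

private lemma Uset_not_mem {j : ℕ} (h : j < (wlist E w).length) :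
    (wlist E w)[j] ∉ Uset E w j := by
  rw [Uset_mem]
  rintro ⟨k, hk, hkj, hka⟩
  rw [(wlist_nodup E w).getElem_inj_iff] at hka
  omega

private lemma Uset_full : Uset E w (wlist E w).length = E := by
  rw [Uset, List.take_length, wlist_toFinset]

private lemma Uset_mono {i j : ℕ} (h : i ≤ j) : Uset E w i ⊆ Uset E w j := by
  intro a ha
  rw [Uset_mem] at ha ⊢
  obtain ⟨k, hk, hki, hka⟩ := ha
  exact ⟨k, hk, lt_of_lt_of_le hki h, hka⟩

private lemma vval_nonneg (j : ℕ) : 0 ≤ vval E w j := by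
  rw [vval]; split <;> simp

private lemma vval_last : vval E w (wlist E w).length = 0 := by
  rw [vval]; simp

private lemma vval_antitone {i j : ℕ} (h : i ≤ j) : vval E w j ≤ vval E w i := by
  rcases eq_or_lt_of_le h with rfl | hij
  · exact le_refl _
  · rw [vval, vval]
    split
    · rename_i hj
      have hi : i < (wlist E w).length := lt_trans hij hj
      rw [dif_pos hi]
      exact max_le_max (wlist_sorted E w i j hi hj hij) (le_refl 0)
    · rename_i hj
      split
      · exact le_max_right _ _
      · exact le_refl _

end ListBasics
section HW
variable {α : Type*} [DecidableEq α] (E : Finset α) (w : α → ℝ)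

private lemma hw_empty : hwval w (∅ : Finset α) = 0 := by
  simp [hwval]

private lemma hw_nonneg (S : Finset α) : 0 ≤ hwval w S :=
  Finset.le_max' _ _ (Finset.mem_insert_self _ _)

private lemma hw_ge {S : Finset α} {i : α} (hi : i ∈ S) : w i ≤ hwval w S :=
  Finset.le_max' _ _ (Finset.mem_insert_of_mem (Finset.mem_image_of_mem w hi))

private lemma hw_expand {S : Finset α} (hS : S ⊆ E) :
    hwval w S = ∑ j ∈ range (wlist E w).length,
      (vval E w j - vval E w (j+1)) * (if (S ∩ Uset E w (j+1)).Nonempty then 1 else 0) := by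
  set n := (wlist E w).length with hn
  by_cases hSe : S = ∅
  · subst hSe
    simp [hw_empty]
  · obtain ⟨a, ha⟩ := Finset.nonempty_of_ne_empty hSe
    set l := wlist E w with hl
    set p : α → Bool := fun x => decide (x ∈ S) with hp
    set jS := List.findIdx p l with hjS
    have hjlt : jS < n := by
      apply List.findIdx_lt_length_of_exists
      exact ⟨a, (wlist_mem E w).2 (hS ha), by simp [hp, ha]⟩
    have hmem : l[jS] ∈ S := by
      have := List.findIdx_getElem (p := p) (xs := l) (w := hjlt)
      simpa [hp] using this
    have hmin : ∀ k, k < jS → ∀ hk : k < n, l[k] ∉ S := by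
      intro k hk hkn
      have := List.not_of_lt_findIdx (p := p) (xs := l) (i := k) hk
      simpa [hp] using this
    have hchar : hwval w S = vval E w jS := by
      have hv : vval E w jS = max 0 (w l[jS]) := by
        rw [vval, dif_pos hjlt, max_comm]
      rw [hv]
      apply le_antisymm
      · apply Finset.max'_le
        intro y hy
        rcases Finset.mem_insert.1 hy with rfl | hy
        · exact le_max_left _ _
        · obtain ⟨i, hiS, rfl⟩ := Finset.mem_image.1 hy
          obtain ⟨k, hk, hka⟩ := List.mem_iff_getElem.1 ((wlist_mem E w).2 (hS hiS))
          have hjk : jS ≤ k := by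
            by_contra hcon
            exact hmin k (lt_of_not_ge hcon) hk (hka ▸ hiS)
          rcases eq_or_lt_of_le hjk with rfl | hjk'
          · rw [hka]; exact le_max_right _ _
          · calc w i = w l[k] := by rw [hka]
              _ ≤ w l[jS] := wlist_sorted E w jS k hjlt hk hjk'
              _ ≤ _ := le_max_right _ _
      · rcases max_choice 0 (w l[jS]) with hc | hc
        · rw [hc]; exact hw_nonneg w S
        · rw [hc]; exact hw_ge w hmem
    have hind : ∀ j, j < n → ((S ∩ Uset E w (j+1)).Nonempty ↔ jS ≤ j) := by
      intro j hj
      constructor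
      · rintro ⟨x, hx⟩
        obtain ⟨hxS, hxU⟩ := Finset.mem_inter.1 hx
        obtain ⟨k, hk, hkj, hka⟩ := (Uset_mem E w).1 hxU
        have : jS ≤ k := by
          by_contra hcon
          exact hmin k (lt_of_not_ge hcon) hk (hka ▸ hxS)
        omega
      · intro hjSj
        exact ⟨l[jS], Finset.mem_inter.2 ⟨hmem, (Uset_mem E w).2 ⟨jS, hjlt, by omega, rfl⟩⟩⟩
    have : ∑ j ∈ range n,
        (vval E w j - vval E w (j+1)) * (if (S ∩ Uset E w (j+1)).Nonempty then 1 else 0)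
        = ∑ j ∈ range n, (if jS ≤ j then vval E w j - vval E w (j+1) else 0) := by
      refine Finset.sum_congr rfl fun j hj => ?_
      rw [Finset.mem_range] at hj
      by_cases hc : jS ≤ j
      · rw [if_pos hc, if_pos ((hind j hj).2 hc), mul_one]
      · rw [if_neg hc, if_neg (fun hne => hc ((hind j hj).1 hne)), mul_zero]
    rw [this, ← Finset.sum_filter]
    have hfil : (range n).filter (fun j => jS ≤ j) = Finset.Ico jS n := by
      ext j
      simp only [Finset.mem_filter, Finset.mem_range, Finset.mem_Ico]
      omega
    rw [hfil, tele _ _ _ (le_of_lt hjlt), hchar]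
    have : vval E w n = 0 := vval_last E w
    rw [this, sub_zero]

private lemma sum_reindex {A : Finset α} (hA : A ⊆ E) (F : α → ℝ) :
    ∑ i ∈ A, F i = ∑ j ∈ range (wlist E w).length,
      ∑ i ∈ A ∩ (Uset E w (j+1) \ Uset E w j), F i := by
  set n := (wlist E w).length with hn
  have key : ∀ m, ∑ j ∈ range m, ∑ i ∈ A ∩ (Uset E w (j+1) \ Uset E w j), F i
      = ∑ i ∈ A ∩ Uset E w m, F i := by
    intro m
    induction m with
    | zero => simp [Uset_zero]
    | succ m ih =>
      rw [Finset.sum_range_succ, ih]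
      have hsub : A ∩ Uset E w m ⊆ A ∩ Uset E w (m+1) :=
        Finset.inter_subset_inter Finset.Subset.rfl (Uset_mono E w (Nat.le_succ m))
      have hdiff : (A ∩ Uset E w (m+1)) \ (A ∩ Uset E w m)
          = A ∩ (Uset E w (m+1) \ Uset E w m) := by
        ext x
        simp only [Finset.mem_sdiff, Finset.mem_inter]
        tauto
      rw [← Finset.sum_sdiff hsub, hdiff]
      ring
  rw [key n]
  congr 1
  symm
  apply Finset.inter_eq_left.2
  intro x hx
  rw [hn, Uset_full]
  exact hA hx

private lemma card_slice {A : Finset α} (j : ℕ) :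
    ((A ∩ Uset E w (j+1)).card : ℝ) - ((A ∩ Uset E w j).card : ℝ)
      = ((A ∩ (Uset E w (j+1) \ Uset E w j)).card : ℝ) := by
  have hsub : A ∩ Uset E w j ⊆ A ∩ Uset E w (j+1) :=
    Finset.inter_subset_inter Finset.Subset.rfl (Uset_mono E w (Nat.le_succ j))
  have hdiff : (A ∩ Uset E w (j+1)) \ (A ∩ Uset E w j)
      = A ∩ (Uset E w (j+1) \ Uset E w j) := by
    ext x
    simp only [Finset.mem_sdiff, Finset.mem_inter]
    tauto
  rw [← hdiff, Finset.card_sdiff_of_subset hsub, Nat.cast_sub (Finset.card_le_card hsub)]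

private lemma slice_singleton {j : ℕ} (hj : j < (wlist E w).length) :
    Uset E w (j+1) \ Uset E w j = {(wlist E w)[j]} := by
  rw [Uset_succ E w hj]
  ext x
  simp only [Finset.mem_sdiff, Finset.mem_insert, Finset.mem_singleton]
  constructor
  · rintro ⟨rfl | hx, hnx⟩
    · rfl
    · exact absurd hx hnx
  · rintro rfl
    exact ⟨Or.inl rfl, Uset_not_mem E w hj⟩

private lemma sum_pos_part {A : Finset α} (hA : A ⊆ E) :
    ∑ i ∈ A, max (w i) 0
      = ∑ j ∈ range (wlist E w).length,
          vval E w j * (((A ∩ Uset E w (j+1)).card : ℝ) - ((A ∩ Uset E w j).card : ℝ)) := by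
  rw [sum_reindex E w hA]
  refine Finset.sum_congr rfl fun j hj => ?_
  rw [Finset.mem_range] at hj
  rw [card_slice, slice_singleton E w hj]
  by_cases hc : (wlist E w)[j] ∈ A
  · rw [Finset.inter_singleton_of_mem hc]
    simp [vval, dif_pos hj]
  · rw [Finset.inter_singleton_of_notMem hc]
    simp

end HW
section Greedy
variable {α : Type*} [DecidableEq α] (E : Finset α) (r : Finset α → ℕ) (w : α → ℝ)

private lemma opt_ub (hcard : ∀ A, r A ≤ A.card)
    (hmono : ∀ A B, A ⊆ B → r A ≤ r B)
    (hsub : ∀ A B, r (A ∪ B) + r (A ∩ B) ≤ r A + r B)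
    {A : Finset α} (hA : A ⊆ E) (hind : r A = A.card) :
    ∑ i ∈ A, w i ≤ optval E r w := by
  set n := (wlist E w).length with hn
  set cA : ℕ → ℝ := fun j => ((A ∩ Uset E w j).card : ℝ) with hcA
  have h1 : ∑ i ∈ A, w i ≤ ∑ i ∈ A, max (w i) 0 :=
    Finset.sum_le_sum fun i _ => le_max_left _ _
  have h2 := sum_pos_part E w hA
  have h3 : ∑ j ∈ range n, vval E w j * (cA (j+1) - cA j)
      = ∑ j ∈ range n, (vval E w j - vval E w (j+1)) * cA (j+1) := by
    symm
    apply abel_swap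
    · simp [hcA, Uset_zero]
    · exact vval_last E w
  have h4 : ∀ j ∈ range n, (vval E w j - vval E w (j+1)) * cA (j+1)
      ≤ (vval E w j - vval E w (j+1)) * (r (Uset E w (j+1)) : ℝ) := by
    intro j _
    apply mul_le_mul_of_nonneg_left ?_ (sub_nonneg.2 (vval_antitone E w (Nat.le_succ j)))
    have hindsub : r (A ∩ Uset E w (j+1)) = (A ∩ Uset E w (j+1)).card :=
      indep_subset r hcard hsub hind Finset.inter_subset_left
    rw [hcA]
    simp only []
    rw [← hindsub]
    exact_mod_cast hmono _ _ Finset.inter_subset_right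
  have h5 : ∑ j ∈ range n, (vval E w j - vval E w (j+1)) * (r (Uset E w (j+1)) : ℝ)
      = optval E r w := by
    apply abel_swap (vval E w) (fun j => (r (Uset E w j) : ℝ))
    · simp [Uset_zero, rank_empty r hcard]
    · exact vval_last E w
  calc ∑ i ∈ A, w i ≤ ∑ i ∈ A, max (w i) 0 := h1
    _ = ∑ j ∈ range n, vval E w j * (cA (j+1) - cA j) := h2
    _ = ∑ j ∈ range n, (vval E w j - vval E w (j+1)) * cA (j+1) := h3
    _ ≤ ∑ j ∈ range n, (vval E w j - vval E w (j+1)) * (r (Uset E w (j+1)) : ℝ) :=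
        Finset.sum_le_sum h4
    _ = optval E r w := h5

private lemma chain_exists (hcard : ∀ A, r A ≤ A.card)
    (hmono : ∀ A B, A ⊆ B → r A ≤ r B)
    (hsub : ∀ A B, r (A ∪ B) + r (A ∩ B) ≤ r A + r B) :
    ∀ j, j ≤ (wlist E w).length → ∃ A : Finset α, A ⊆ Uset E w j ∧ r A = A.card ∧
      ∀ m, m ≤ j → (A ∩ Uset E w m).card = r (Uset E w m) := by
  intro j
  induction j with
  | zero =>
    intro _
    refine ⟨∅, by simp, by simp [rank_empty r hcard], ?_⟩
    intro m hm
    have : m = 0 := Nat.le_zero.1 hm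
    subst this
    simp [Uset_zero, rank_empty r hcard]
  | succ j ih =>
    intro hj
    obtain ⟨A, hAU, hAind, hAcard⟩ := ih (Nat.le_of_succ_le hj)
    have hAj : A ∩ Uset E w j = A := Finset.inter_eq_left.2 hAU
    have hAcardj : A.card = r (Uset E w j) := by
      have := hAcard j (le_refl j)
      rwa [hAj] at this
    have hjn : j < (wlist E w).length := hj
    have hrstep : r (Uset E w (j+1)) ≤ r (Uset E w j) + 1 := by
      rw [Uset_succ E w hjn]
      exact rank_insert_le r hcard hsub _ _
    have hrmono : r (Uset E w j) ≤ r (Uset E w (j+1)) :=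
      hmono _ _ (Uset_mono E w (Nat.le_succ j))
    by_cases hc : r (Uset E w (j+1)) ≤ A.card
    · refine ⟨A, hAU.trans (Uset_mono E w (Nat.le_succ j)), hAind, ?_⟩
      intro m hm
      rcases Nat.lt_succ_iff_lt_or_eq.1 (Nat.lt_succ_of_le hm) with hm' | rfl
      · exact hAcard m (Nat.lt_succ_iff.1 hm')
      · have hAm : A ∩ Uset E w (j+1) = A :=
          Finset.inter_eq_left.2 (hAU.trans (Uset_mono E w (Nat.le_succ j)))
        rw [hAm]
        omega
    · push_neg at hc
      obtain ⟨x, hxU, hxA, hxr⟩ := rank_aug r hcard hmono hsub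
        (hAU.trans (Uset_mono E w (Nat.le_succ j))) hAind (by simp only [Nat.succ_eq_add_one] at *; omega)
      refine ⟨insert x A, ?_, ?_, ?_⟩
      · intro y hy
        rcases Finset.mem_insert.1 hy with rfl | hy
        · exact hxU
        · exact Uset_mono E w (Nat.le_succ j) (hAU hy)
      · rw [hxr, Finset.card_insert_of_notMem hxA]
      · intro m hm
        have hins : insert x A ⊆ Uset E w (j+1) := by
          intro y hy
          rcases Finset.mem_insert.1 hy with rfl | hy
          · exact hxU
          · exact Uset_mono E w (Nat.le_succ j) (hAU hy)
        rcases Nat.lt_succ_iff_lt_or_eq.1 (Nat.lt_succ_of_le hm) with hm' | rfl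
        · have hmj : m ≤ j := Nat.lt_succ_iff.1 hm'
          have hle1 : (insert x A ∩ Uset E w m).card ≤ r (Uset E w m) := by
            have hi : r (insert x A ∩ Uset E w m) = (insert x A ∩ Uset E w m).card :=
              indep_subset r hcard hsub
                (by rw [hxr, Finset.card_insert_of_notMem hxA]) Finset.inter_subset_left
            rw [← hi]
            exact hmono _ _ Finset.inter_subset_right
          have hle2 : r (Uset E w m) ≤ (insert x A ∩ Uset E w m).card := by
            rw [← hAcard m hmj]
            exact Finset.card_le_card
              (Finset.inter_subset_inter (Finset.subset_insert x A) Finset.Subset.rfl)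
          omega
        · have hAm : insert x A ∩ Uset E w (j+1) = insert x A := Finset.inter_eq_left.2 hins
          rw [hAm, Finset.card_insert_of_notMem hxA]
          simp only [Nat.succ_eq_add_one] at *
          omega

private lemma opt_attain (hcard : ∀ A, r A ≤ A.card)
    (hmono : ∀ A B, A ⊆ B → r A ≤ r B)
    (hsub : ∀ A B, r (A ∪ B) + r (A ∩ B) ≤ r A + r B) :
    ∃ A : Finset α, A ⊆ E ∧ r A = A.card ∧ ∑ i ∈ A, w i = optval E r w := by
  set n := (wlist E w).length with hn
  have hex : ∃ j, vval E w j ≤ 0 := ⟨n, le_of_eq (vval_last E w)⟩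
  set J := Nat.find hex with hJ
  have hJle : J ≤ n := Nat.find_le (le_of_eq (vval_last E w))
  have hJpos : ∀ k, k < J → 0 < vval E w k := fun k hk => lt_of_not_ge (Nat.find_min hex hk)
  have hJv : vval E w J = 0 := le_antisymm (Nat.find_spec hex) (vval_nonneg E w J)
  have hvJ0 : ∀ k, J ≤ k → vval E w k = 0 := fun k hk =>
    le_antisymm (hJv ▸ vval_antitone E w hk) (vval_nonneg E w k)
  obtain ⟨A, hAU, hAind, hAcard⟩ := chain_exists E r w hcard hmono hsub J hJle
  have hAE : A ⊆ E := hAU.trans (Uset_subset E w J)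
  refine ⟨A, hAE, hAind, ?_⟩
  have hpos : ∀ i ∈ A, w i = max (w i) 0 := by
    intro i hi
    obtain ⟨k, hk, hkJ, hka⟩ := (Uset_mem E w).1 (hAU hi)
    have hv := hJpos k hkJ
    rw [vval, dif_pos hk, hka] at hv
    have hwi : 0 < w i := by
      by_contra hcon
      push_neg at hcon
      rw [max_eq_right hcon] at hv
      exact lt_irrefl _ hv
    rw [max_eq_left (le_of_lt hwi)]
  rw [Finset.sum_congr rfl hpos, sum_pos_part E w hAE]
  refine Finset.sum_congr rfl fun j hj => ?_
  rw [Finset.mem_range] at hj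
  by_cases hc : j < J
  · have e1 : ((A ∩ Uset E w (j+1)).card : ℝ) = (r (Uset E w (j+1)) : ℝ) := by
      exact_mod_cast congrArg (Nat.cast : ℕ → ℝ) (hAcard (j+1) hc)
    have e2 : ((A ∩ Uset E w j).card : ℝ) = (r (Uset E w j) : ℝ) := by
      exact_mod_cast congrArg (Nat.cast : ℕ → ℝ) (hAcard j (le_of_lt hc))
    rw [e1, e2]
  · have h1 : vval E w j = 0 := hvJ0 j (le_of_not_gt hc)
    rw [h1]
    ring

end Greedy
section Scalar
variable {α : Type*} [DecidableEq α]

private lemma signsum (S : Finset α) :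
    ∑ X ∈ S.powerset, (-1:ℝ)^X.card = if S = ∅ then 1 else 0 := by
  have h := Finset.sum_powerset_neg_one_pow_card (x := S)
  have h2 := congrArg (fun z : ℤ => (z : ℝ)) h
  push_cast at h2
  split at h2 <;> split <;> simp_all

private lemma scalar_identity (E : Finset α) (r : Finset α → ℕ) (w : α → ℝ)
    (hcard : ∀ A, r A ≤ A.card)
    (hmono : ∀ A B, A ⊆ B → r A ≤ r B) :
    ∑ A ∈ E.powerset, (betaT (E \ A) (contr r A) : ℝ) * hwval w (E \ A) = optval E r w := by
  classical
  set n := (wlist E w).length with hn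
  set u : Finset α → ℝ := fun S => ∑ Y ∈ S.powerset, (-1:ℝ)^Y.card * (r (E \ Y) : ℝ) with hu
  have hbeta : ∀ A : Finset α, A ⊆ E → (betaT (E \ A) (contr r A) : ℝ)
      = -∑ X ∈ (E \ A).powerset, (-1:ℝ)^X.card * ((r (A ∪ X) : ℝ) - (r A : ℝ)) := by
    intro A hA
    have h1 : (betaT (E \ A) (contr r A) : ℝ)
        = (-1:ℝ)^(contr r A (E \ A) + 1) * ((-1:ℝ)^(contr r A (E \ A)) *
            ∑ X ∈ (E \ A).powerset, (-1:ℝ)^X.card * (contr r A X : ℝ)) := by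
      rw [betaT, betaInv]
      push_cast
      ring
    have h2 : (-1:ℝ)^(contr r A (E \ A) + 1) * (-1:ℝ)^(contr r A (E \ A)) = -1 := by
      rw [← pow_add,
        show contr r A (E \ A) + 1 + contr r A (E \ A) = 2*(contr r A (E \ A)) + 1 by ring,
        pow_succ, pow_mul]
      simp
    rw [h1, ← mul_assoc, h2, neg_one_mul, neg_inj]
    refine Finset.sum_congr rfl fun X hX => ?_
    congr 1
    simp only [contr]
    rw [Nat.cast_sub (hmono A (A ∪ X) Finset.subset_union_left)]
  have hb : ∑ A ∈ E.powerset, (betaT (E \ A) (contr r A) : ℝ) * hwval w (E \ A)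
      = ∑ S ∈ E.powerset, (betaT S (contr r (E \ S)) : ℝ) * hwval w S := by
    refine Finset.sum_nbij' (fun A => E \ A) (fun S => E \ S) ?_ ?_ ?_ ?_ ?_
    · intro A hA
      exact Finset.mem_powerset.2 (Finset.sdiff_subset)
    · intro S hS
      exact Finset.mem_powerset.2 (Finset.sdiff_subset)
    · intro A hA
      exact Finset.sdiff_sdiff_eq_self (Finset.mem_powerset.1 hA)
    · intro S hS
      exact Finset.sdiff_sdiff_eq_self (Finset.mem_powerset.1 hS)
    · intro A hA
      rw [Finset.sdiff_sdiff_eq_self (Finset.mem_powerset.1 hA)]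
  have hc1 : ∀ S : Finset α, S ⊆ E →
      ∑ X ∈ S.powerset, (-1:ℝ)^X.card * (r ((E \ S) ∪ X) : ℝ) = (-1:ℝ)^S.card * u S := by
    intro S hSE
    rw [hu, Finset.mul_sum]
    refine Finset.sum_nbij' (fun X => S \ X) (fun Y => S \ Y) ?_ ?_ ?_ ?_ ?_
    · intro X hX
      exact Finset.mem_powerset.2 (Finset.sdiff_subset)
    · intro Y hY
      exact Finset.mem_powerset.2 (Finset.sdiff_subset)
    · intro X hX
      exact Finset.sdiff_sdiff_eq_self (Finset.mem_powerset.1 hX)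
    · intro Y hY
      exact Finset.sdiff_sdiff_eq_self (Finset.mem_powerset.1 hY)
    · intro X hX
      have hXS := Finset.mem_powerset.1 hX
      have e1 : (E \ S) ∪ X = E \ (S \ X) := by
        ext a
        simp only [Finset.mem_union, Finset.mem_sdiff]
        constructor
        · rintro (⟨haE, haS⟩ | haX)
          · exact ⟨haE, fun h => haS h.1⟩
          · exact ⟨hSE (hXS haX), fun h => h.2 haX⟩
        · rintro ⟨haE, h⟩
          by_cases haS : a ∈ S
          · exact Or.inr (by_contra fun haX => h ⟨haS, haX⟩)
          · exact Or.inl ⟨haE, haS⟩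
      have e2 : (-1:ℝ)^X.card = (-1:ℝ)^S.card * (-1:ℝ)^(S \ X).card := by
        rw [Finset.card_sdiff_of_subset hXS, ← pow_add]
        have hle := Finset.card_le_card hXS
        rw [show S.card + (S.card - X.card) = X.card + 2*(S.card - X.card) by omega,
          pow_add, pow_mul]
        simp
      rw [e1, e2]
      ring
  have hbS : ∀ S ∈ E.powerset, (betaT S (contr r (E \ S)) : ℝ) * hwval w S
      = (-((-1:ℝ)^S.card * u S)) * hwval w S := by
    intro S hS
    have hSE := Finset.mem_powerset.1 hS
    by_cases hSe : S = ∅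
    · subst hSe
      simp [hw_empty]
    · have h1 := hbeta (E \ S) Finset.sdiff_subset
      rw [Finset.sdiff_sdiff_eq_self hSE] at h1
      rw [h1]
      congr 2
      have hsplit : ∑ X ∈ S.powerset, (-1:ℝ)^X.card * ((r ((E \ S) ∪ X) : ℝ) - (r (E \ S) : ℝ))
          = ∑ X ∈ S.powerset, (-1:ℝ)^X.card * (r ((E \ S) ∪ X) : ℝ)
            - (r (E \ S) : ℝ) * ∑ X ∈ S.powerset, (-1:ℝ)^X.card := by
        rw [Finset.mul_sum, ← Finset.sum_sub_distrib]
        exact Finset.sum_congr rfl fun X _ => by ring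
      rw [hsplit, hc1 S hSE, signsum, if_neg hSe]
      ring
  rw [hb, Finset.sum_congr rfl hbS]
  have hexp : ∀ S ∈ E.powerset, (-((-1:ℝ)^S.card * u S)) * hwval w S
      = ∑ j ∈ range n, (-((-1:ℝ)^S.card * u S)) *
          ((vval E w j - vval E w (j+1)) * (if (S ∩ Uset E w (j+1)).Nonempty then 1 else 0)) := by
    intro S hS
    rw [hw_expand E w (Finset.mem_powerset.1 hS), Finset.mul_sum]
  rw [Finset.sum_congr rfl hexp, Finset.sum_comm]
  have hinner : ∀ j ∈ range n,
      ∑ S ∈ E.powerset, (-((-1:ℝ)^S.card * u S)) *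
          ((vval E w j - vval E w (j+1)) * (if (S ∩ Uset E w (j+1)).Nonempty then 1 else 0))
      = (vval E w j - vval E w (j+1)) * (r (Uset E w (j+1)) : ℝ) := by
    intro j hj
    set U := Uset E w (j+1) with hU
    set t := vval E w j - vval E w (j+1) with ht
    have hterm : ∀ S ∈ E.powerset, (-((-1:ℝ)^S.card * u S)) *
        (t * (if (S ∩ U).Nonempty then 1 else 0))
        = if (S ∩ U).Nonempty then t * (-((-1:ℝ)^S.card * u S)) else 0 := by
      intro S _
      by_cases h : (S ∩ U).Nonempty
      · rw [if_pos h, if_pos h]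
        ring
      · rw [if_neg h, if_neg h]
        ring
    rw [Finset.sum_congr rfl hterm, ← Finset.sum_filter, ← Finset.mul_sum]
    have hnotfil : E.powerset.filter (fun S => ¬(S ∩ U).Nonempty) = (E \ U).powerset := by
      ext S
      simp only [Finset.mem_filter, Finset.mem_powerset, Finset.not_nonempty_iff_eq_empty,
        Finset.subset_sdiff, ← Finset.disjoint_iff_inter_eq_empty]
    have hmoeb1 : ∑ S ∈ E.powerset, (-1:ℝ)^S.card * u S = (r (E \ E) : ℝ) :=
      moeb E (fun Y => (r (E \ Y) : ℝ))
    have hmoeb2 : ∑ S ∈ (E \ U).powerset, (-1:ℝ)^S.card * u S = (r (E \ (E \ U)) : ℝ) :=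
      moeb (E \ U) (fun Y => (r (E \ Y) : ℝ))
    have hsplit := Finset.sum_filter_add_sum_filter_not E.powerset
      (fun S => (S ∩ U).Nonempty) (fun S => (-1:ℝ)^S.card * u S)
    rw [hnotfil, hmoeb2] at hsplit
    rw [hmoeb1] at hsplit
    have hEU : E \ (E \ U) = U := Finset.sdiff_sdiff_eq_self (Uset_subset E w (j+1))
    rw [hEU] at hsplit
    have hEE : (r (E \ E) : ℝ) = 0 := by
      rw [Finset.sdiff_self]
      exact_mod_cast rank_empty r hcard
    rw [hEE] at hsplit
    have hfil : ∑ S ∈ E.powerset.filter (fun S => (S ∩ U).Nonempty),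
        (-((-1:ℝ)^S.card * u S)) = (r U : ℝ) := by
      rw [Finset.sum_neg_distrib]
      have : ∑ S ∈ E.powerset.filter (fun S => (S ∩ U).Nonempty),
          (-1:ℝ)^S.card * u S = -(r U : ℝ) := by linarith
      rw [this, neg_neg]
    rw [hfil]
  rw [Finset.sum_congr rfl hinner]
  apply abel_swap (vval E w) (fun j => (r (Uset E w j) : ℝ))
  · simp [Uset_zero, rank_empty r hcard]
  · exact vval_last E w

end Scalar
section Main
variable {α : Type*} [DecidableEq α]

private def GoodMax (E : Finset α) (w : α → ℝ) (S : Set (α → ℝ)) (m : ℝ) : Prop :=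
  (∀ x ∈ S, ∑ i ∈ E, w i * x i ≤ m) ∧ ∃ x ∈ S, ∑ i ∈ E, w i * x i = m

private lemma fw_add (E : Finset α) (w x y : α → ℝ) :
    ∑ i ∈ E, w i * (x + y) i = ∑ i ∈ E, w i * x i + ∑ i ∈ E, w i * y i := by
  rw [← Finset.sum_add_distrib]
  exact Finset.sum_congr rfl fun i _ => by simp [mul_add]

private lemma fw_smul (E : Finset α) (w : α → ℝ) (c : ℝ) (x : α → ℝ) :
    ∑ i ∈ E, w i * (c • x) i = c * ∑ i ∈ E, w i * x i := by
  rw [Finset.mul_sum]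
  exact Finset.sum_congr rfl fun i _ => by simp [smul_eq_mul]; ring

private lemma fw_zero (E : Finset α) (w : α → ℝ) :
    ∑ i ∈ E, w i * (0 : α → ℝ) i = 0 := by simp

private lemma GoodMax.addl {E : Finset α} {w : α → ℝ} {S T : Set (α → ℝ)} {mS mT : ℝ}
    (hS : GoodMax E w S mS) (hT : GoodMax E w T mT) : GoodMax E w (S + T) (mS + mT) := by
  constructor
  · intro x hx
    obtain ⟨y, hy, z, hz, rfl⟩ := Set.mem_add.1 hx
    rw [fw_add]
    exact add_le_add (hS.1 y hy) (hT.1 z hz)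
  · obtain ⟨y, hy, hym⟩ := hS.2
    obtain ⟨z, hz, hzm⟩ := hT.2
    exact ⟨y + z, Set.add_mem_add hy hz, by rw [fw_add, hym, hzm]⟩

private lemma GoodMax.smull {E : Finset α} {w : α → ℝ} {S : Set (α → ℝ)} {m c : ℝ}
    (hc : 0 ≤ c) (hS : GoodMax E w S m) : GoodMax E w (c • S) (c * m) := by
  constructor
  · intro x hx
    obtain ⟨y, hy, rfl⟩ := Set.mem_smul_set.1 hx
    rw [fw_smul]
    exact mul_le_mul_of_nonneg_left (hS.1 y hy) hc
  · obtain ⟨y, hy, hym⟩ := hS.2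
    exact ⟨c • y, Set.smul_mem_smul_set hy, by rw [fw_smul, hym]⟩

private lemma GoodMax.suml {ι : Type*} {E : Finset α} {w : α → ℝ} (s : Finset ι)
    (F : ι → Set (α → ℝ)) (m : ι → ℝ) (h : ∀ i ∈ s, GoodMax E w (F i) (m i)) :
    GoodMax E w (∑ i ∈ s, F i) (∑ i ∈ s, m i) := by
  induction s using Finset.cons_induction with
  | empty =>
    refine ⟨?_, ⟨0, ?_, fw_zero E w⟩⟩
    · intro x hx
      rw [Finset.sum_empty] at hx ⊢
      rw [Set.mem_zero.1 hx, fw_zero]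
    · rw [Finset.sum_empty]
      exact Set.mem_zero.2 rfl
  | cons a s ha ih =>
    rw [Finset.sum_cons, Finset.sum_cons]
    exact GoodMax.addl (h a (Finset.mem_cons_self a s))
      (ih fun i hi => h i (Finset.mem_cons.2 (Or.inr hi)))

private lemma fw_single (E : Finset α) (w : α → ℝ) {i : α} (hi : i ∈ E) :
    ∑ i' ∈ E, w i' * (Pi.single i 1 : α → ℝ) i' = w i := by
  have : ∀ i' ∈ E, w i' * (Pi.single i 1 : α → ℝ) i' = if i' = i then w i' else 0 := by
    intro i' _
    rw [Pi.single_apply]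
    split <;> simp
  rw [Finset.sum_congr rfl this, Finset.sum_ite_eq', if_pos hi]

private lemma good_GD (E : Finset α) (w : α → ℝ) {J : Finset α} (hJ : J ⊆ E) :
    GoodMax E w (insert 0 {x | ∃ i ∈ J, x = Pi.single i (1 : ℝ)}) (hwval w J) := by
  constructor
  · intro x hx
    rcases Set.mem_insert_iff.1 hx with rfl | hx
    · rw [fw_zero]
      exact hw_nonneg w J
    · obtain ⟨i, hiJ, rfl⟩ := hx
      rw [fw_single E w (hJ hiJ)]
      exact hw_ge w hiJ
  · have hmem := Finset.max'_mem (insert (0:ℝ) (J.image w)) (Finset.insert_nonempty _ _)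
    rcases Finset.mem_insert.1 hmem with h0 | him
    · exact ⟨0, Set.mem_insert _ _, by rw [fw_zero, hwval]; exact h0.symm⟩
    · obtain ⟨i, hiJ, hwi⟩ := Finset.mem_image.1 him
      refine ⟨Pi.single i 1, Set.mem_insert_of_mem _ ⟨i, hiJ, rfl⟩, ?_⟩
      rw [fw_single E w (hJ hiJ), hwval]; exact hwi

private lemma fw_indic (E : Finset α) (w : α → ℝ) {A : Finset α} (hA : A ⊆ E) :
    ∑ i ∈ E, w i * indic A i = ∑ i ∈ A, w i := by
  have : ∀ i ∈ E, w i * indic A i = if i ∈ A then w i else 0 := by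
    intro i _
    rw [indic]
    split <;> simp
  rw [Finset.sum_congr rfl this, Finset.sum_ite_mem, Finset.inter_eq_right.2 hA]

private lemma good_Gind (E : Finset α) (r : Finset α → ℕ) (w : α → ℝ)
    (hcard : ∀ A, r A ≤ A.card) (hmono : ∀ A B, A ⊆ B → r A ≤ r B)
    (hsub : ∀ A B, r (A ∪ B) + r (A ∩ B) ≤ r A + r B) :
    GoodMax E w {x | ∃ A : Finset α, A ⊆ E ∧ r A = A.card ∧ x = indic A} (optval E r w) := by
  constructor
  · rintro x ⟨A, hA, hind, rfl⟩
    rw [fw_indic E w hA]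
    exact opt_ub E r w hcard hmono hsub hA hind
  · obtain ⟨A, hA, hind, hopt⟩ := opt_attain E r w hcard hmono hsub
    exact ⟨indic A, ⟨A, hA, hind, rfl⟩, by rw [fw_indic E w hA, hopt]⟩

private lemma hull_finsum {ι : Type*} (s : Finset ι) (G : ι → Set (α → ℝ)) :
    ∑ i ∈ s, convexHull ℝ (G i) = convexHull ℝ (∑ i ∈ s, G i) := by
  induction s using Finset.cons_induction with
  | empty =>
    rw [Finset.sum_empty, Finset.sum_empty]
    have : (0 : Set (α → ℝ)) = {0} := rfl
    rw [this, convexHull_singleton]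
  | cons a s ha ih =>
    rw [Finset.sum_cons, Finset.sum_cons, ih, ← convexHull_add]

end Main
/-- Theorem 4.4: `I_M = ∑_{A⊆E} β̃(M/A) D_{E−A}` as a signed Minkowski sum, i.e.
`I_M + ∑_{β̃(M/A)<0} (−β̃(M/A)) D_{E−A} = ∑_{β̃(M/A)≥0} β̃(M/A) D_{E−A}`. -/
theorem indepPolytope_signed_sum {α : Type*} [DecidableEq α]
    (E : Finset α) (r : Finset α → ℕ)
    (hcard : ∀ A, r A ≤ A.card)
    (hmono : ∀ A B, A ⊆ B → r A ≤ r B)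
    (hsub : ∀ A B, r (A ∪ B) + r (A ∩ B) ≤ r A + r B)
    (hE : ∀ A, r (A ∩ E) = r A) :
    indepPolytope E r +
        ∑ A ∈ E.powerset.filter (fun A => betaT (E \ A) (contr r A) < 0),
          (-(betaT (E \ A) (contr r A) : ℝ)) • Dsimp (E \ A)
      = ∑ A ∈ E.powerset.filter (fun A => 0 ≤ betaT (E \ A) (contr r A)),
          ((betaT (E \ A) (contr r A) : ℝ)) • Dsimp (E \ A) := by
  classical
  set Nset := E.powerset.filter (fun A => betaT (E \ A) (contr r A) < 0) with hNset
  set Pset := E.powerset.filter (fun A => 0 ≤ betaT (E \ A) (contr r A)) with hPset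
  set Gind : Set (α → ℝ) := {x | ∃ A : Finset α, A ⊆ E ∧ r A = A.card ∧ x = indic A} with hGind
  set GD : Finset α → Set (α → ℝ) :=
    fun J => insert 0 {x | ∃ i ∈ J, x = Pi.single i (1:ℝ)} with hGD
  set QL : Set (α → ℝ) :=
    Gind + ∑ A ∈ Nset, (-(betaT (E \ A) (contr r A) : ℝ)) • GD (E \ A) with hQL
  set QR : Set (α → ℝ) :=
    ∑ A ∈ Pset, ((betaT (E \ A) (contr r A) : ℝ)) • GD (E \ A) with hQR
  have hL : indepPolytope E r
        + ∑ A ∈ Nset, (-(betaT (E \ A) (contr r A) : ℝ)) • Dsimp (E \ A)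
      = convexHull ℝ QL := by
    have h1 : ∀ A ∈ Nset, (-(betaT (E \ A) (contr r A) : ℝ)) • Dsimp (E \ A)
        = convexHull ℝ ((-(betaT (E \ A) (contr r A) : ℝ)) • GD (E \ A)) := by
      intro A _
      rw [Dsimp, convexHull_smul]
    rw [Finset.sum_congr rfl h1, hull_finsum, indepPolytope, ← convexHull_add]
  have hR : ∑ A ∈ Pset, ((betaT (E \ A) (contr r A) : ℝ)) • Dsimp (E \ A)
      = convexHull ℝ QR := by
    have h1 : ∀ A ∈ Pset, ((betaT (E \ A) (contr r A) : ℝ)) • Dsimp (E \ A)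
        = convexHull ℝ (((betaT (E \ A) (contr r A) : ℝ)) • GD (E \ A)) := by
      intro A _
      rw [Dsimp, convexHull_smul]
    rw [Finset.sum_congr rfl h1, hull_finsum]
  have hsuppGD : ∀ J : Finset α, J ⊆ E → ∀ x ∈ GD J, ∀ a, a ∉ E → x a = 0 := by
    intro J hJ x hx a ha
    rcases Set.mem_insert_iff.1 hx with rfl | ⟨i, hi, rfl⟩
    · rfl
    · refine Pi.single_eq_of_ne (fun h => ha (hJ ?_)) 1
      rw [h]
      exact hi
  have hsuppSum : ∀ (s : Finset (Finset α)) (c : Finset α → ℝ),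
      ∀ x ∈ (∑ A ∈ s, c A • GD (E \ A)), ∀ a, a ∉ E → x a = 0 := by
    intro s c
    induction s using Finset.cons_induction with
    | empty =>
      intro x hx a ha
      rw [Finset.sum_empty] at hx
      rw [Set.mem_zero.1 hx]
      rfl
    | cons A s hA ih =>
      intro x hx a ha
      rw [Finset.sum_cons] at hx
      obtain ⟨y, hy, z, hz, rfl⟩ := Set.mem_add.1 hx
      obtain ⟨y', hy', rfl⟩ := Set.mem_smul_set.1 hy
      have h1 := hsuppGD (E \ A) Finset.sdiff_subset y' hy' a ha
      have h2 := ih z hz a ha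
      simp [h1, h2]
  have hsuppQL : ∀ x ∈ QL, ∀ a, a ∉ E → x a = 0 := by
    intro x hx a ha
    obtain ⟨y, hy, z, hz, rfl⟩ := Set.mem_add.1 hx
    obtain ⟨A, hA, _, rfl⟩ := hy
    have h1 : indic A a = 0 := by
      rw [indic, if_neg (fun h => ha (hA h))]
    have h2 := hsuppSum Nset _ z hz a ha
    simp [h1, h2]
  have hsuppQR : ∀ x ∈ QR, ∀ a, a ∉ E → x a = 0 := fun x hx => hsuppSum Pset _ x hx
  have hfinGD : ∀ J : Finset α, (GD J).Finite := by
    intro J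
    apply Set.Finite.insert
    have hsubm : {x : α → ℝ | ∃ i ∈ J, x = Pi.single i 1}
        ⊆ (fun i => (Pi.single i 1 : α → ℝ)) '' ↑J := by
      rintro x ⟨i, hi, rfl⟩
      exact ⟨i, hi, rfl⟩
    exact Set.Finite.subset ((J.finite_toSet).image _) hsubm
  have hfinSum : ∀ (s : Finset (Finset α)) (c : Finset α → ℝ),
      (∑ A ∈ s, c A • GD (E \ A)).Finite := by
    intro s c
    induction s using Finset.cons_induction with
    | empty =>
      rw [Finset.sum_empty]
      have : (0 : Set (α → ℝ)) = {0} := rfl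
      rw [this]
      exact Set.finite_singleton 0
    | cons A s hA ih =>
      rw [Finset.sum_cons]
      exact Set.Finite.add ((hfinGD _).smul_set) ih
  have hfinGind : Gind.Finite := by
    have hsubm : Gind ⊆ indic '' ↑E.powerset := by
      rintro x ⟨A, hA, _, rfl⟩
      exact ⟨A, Finset.mem_coe.2 (Finset.mem_powerset.2 hA), rfl⟩
    exact Set.Finite.subset ((E.powerset.finite_toSet).image _) hsubm
  have hfinQL : QL.Finite := hfinGind.add (hfinSum Nset _)
  have hfinQR : QR.Finite := hfinSum Pset _
  have hgoodL : ∀ w : α → ℝ, GoodMax E w QL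
      (optval E r w + ∑ A ∈ Nset, (-(betaT (E \ A) (contr r A) : ℝ)) * hwval w (E \ A)) := by
    intro w
    apply GoodMax.addl
    · exact good_Gind E r w hcard hmono hsub
    · apply GoodMax.suml
      intro A hA
      apply GoodMax.smull
      · have h := (Finset.mem_filter.1 hA).2
        have h2 : (betaT (E \ A) (contr r A) : ℝ) < 0 := by exact_mod_cast h
        linarith
      · exact good_GD E w Finset.sdiff_subset
  have hgoodR : ∀ w : α → ℝ, GoodMax E w QR
      (∑ A ∈ Pset, ((betaT (E \ A) (contr r A) : ℝ)) * hwval w (E \ A)) := by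
    intro w
    apply GoodMax.suml
    intro A hA
    apply GoodMax.smull
    · have h := (Finset.mem_filter.1 hA).2
      exact_mod_cast h
    · exact good_GD E w Finset.sdiff_subset
  have hmeq : ∀ w : α → ℝ,
      optval E r w + ∑ A ∈ Nset, (-(betaT (E \ A) (contr r A) : ℝ)) * hwval w (E \ A)
      = ∑ A ∈ Pset, ((betaT (E \ A) (contr r A) : ℝ)) * hwval w (E \ A) := by
    intro w
    have hid := scalar_identity E r w hcard hmono
    have hNP : Nset = E.powerset.filter (fun A => ¬ 0 ≤ betaT (E \ A) (contr r A)) := by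
      rw [hNset]
      ext A
      simp [Finset.mem_filter, not_le]
    have hsplit := Finset.sum_filter_add_sum_filter_not E.powerset
      (fun A => 0 ≤ betaT (E \ A) (contr r A))
      (fun A => (betaT (E \ A) (contr r A) : ℝ) * hwval w (E \ A))
    rw [← hNP] at hsplit
    have h2 : ∑ A ∈ Nset, (-(betaT (E \ A) (contr r A) : ℝ)) * hwval w (E \ A)
        = -∑ A ∈ Nset, (betaT (E \ A) (contr r A) : ℝ) * hwval w (E \ A) := by
      rw [← Finset.sum_neg_distrib]
      exact Finset.sum_congr rfl fun A _ => by ring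
    rw [h2]
    rw [hid] at hsplit
    linarith
  rw [hL, hR]
  apply Set.Subset.antisymm
  · apply convexHull_min ?_ (convex_convexHull ℝ QR)
    intro x hx
    apply mem_hull_of_sep E QR hfinQR hsuppQR x (hsuppQL x hx)
    intro w
    obtain ⟨q, hq, hfq⟩ := (hgoodR w).2
    refine ⟨q, hq, ?_⟩
    rw [hfq, ← hmeq w]
    exact (hgoodL w).1 x hx
  · apply convexHull_min ?_ (convex_convexHull ℝ QL)
    intro x hx
    apply mem_hull_of_sep E QL hfinQL hsuppQL x (hsuppQR x hx)
    intro w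
    obtain ⟨q, hq, hfq⟩ := (hgoodL w).2
    refine ⟨q, hq, ?_⟩
    rw [hfq, hmeq w]
    exact (hgoodR w).1 x hx
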